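/- Let G and H be finitely generated groups, Λ a finitely generated group containing a subgroup Λ₀, and suppose: Γ is bi-Lipschitz to Λ, and Δ is bi-Lipschitz to Λ₀ (all with word metrics). Since Λ₀ acts translation-like on Λ by right multiplication, Δ admits a translation-like action on Γ, and the chain-metric quotient Γ/Δ is bi-Lipschitz to the coset space Λ/Λ₀ with its chain metric. -/

import Mathlib

/-- A translation-like (right) action of a group `K` on a metric space `X`. -/
def RightTranslationLike {K X : Type*} [Group K] [MetricSpace X]
    (α : K → X → X) : Prop :=
  (∀ x, α 1 x = x) ∧ (∀ k₁ k₂ x, α (k₁ * k₂) x = α k₂ (α k₁ x)) ∧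
  (∀ k x, α k x = x → k = 1) ∧ ∀ k, ∃ C : ℝ, ∀ x, dist x (α k x) ≤ C

/-- A chain from `x` to `y` relative to the action `α`. -/
def IsChainFrom {K X : Type*} (α : K → X → X) (x y : X)
    (l : List (X × X)) : Prop :=
  (l.map Prod.fst).head? = some x ∧ (l.map Prod.snd).getLast? = some y ∧
  l.Chain' (fun p q => ∃ k : K, α k p.2 = q.1)

/-- The chain distance on the orbit space. -/
noncomputable def chainDist {K X : Type*} [MetricSpace X] (α : K → X → X)
    (x y : X) : ℝ :=
  sInf {s : ℝ | ∃ l : List (X × X), IsChainFrom α x y l ∧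
    s = (l.map fun p => dist p.1 p.2).sum}

section Rep
variable {Λ : Type*} [Group Λ] (Λ₀ : Subgroup Λ)

noncomputable def repF (g : Λ) : Λ := (QuotientGroup.mk g : Λ ⧸ Λ₀).out

lemma repF_mem (g : Λ) : (repF Λ₀ g)⁻¹ * g ∈ Λ₀ := by
  rw [← QuotientGroup.eq]; simp [repF]

noncomputable def hpart (g : Λ) : Λ₀ := ⟨(repF Λ₀ g)⁻¹ * g, repF_mem Λ₀ g⟩

lemma repF_mul_hpart (g : Λ) : repF Λ₀ g * (hpart Λ₀ g : Λ) = g := by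
  simp [hpart]

lemma repF_mul (g : Λ) (h : Λ₀) : repF Λ₀ (g * h) = repF Λ₀ g := by
  unfold repF; congr 1; rw [QuotientGroup.eq]; simp

lemma repF_repF (g : Λ) : repF Λ₀ (repF Λ₀ g) = repF Λ₀ g := by
  simp [repF]

end Rep

section BAct
variable {Δ Λ : Type*} [Group Δ] [Group Λ] (Λ₀ : Subgroup Λ) (ψ : Δ ≃ Λ₀)

noncomputable def bAct (d : Δ) (g : Λ) : Λ :=
  repF Λ₀ g * (ψ (ψ.symm (hpart Λ₀ g) * d) : Λ)

lemma bAct_coset (d : Δ) (g : Λ) :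
    bAct Λ₀ ψ d g = g * ((hpart Λ₀ g : Λ)⁻¹ * (ψ (ψ.symm (hpart Λ₀ g) * d) : Λ)) := by
  show repF Λ₀ g * _ = g * (((repF Λ₀ g)⁻¹ * g)⁻¹ * _)
  simp [mul_assoc]

lemma bAct_repF (d : Δ) (g : Λ) : repF Λ₀ (bAct Λ₀ ψ d g) = repF Λ₀ g := by
  rw [show bAct Λ₀ ψ d g = repF Λ₀ g * ((ψ (ψ.symm (hpart Λ₀ g) * d) : Λ₀) : Λ) from rfl,
    repF_mul, repF_repF]

lemma bAct_hpart (d : Δ) (g : Λ) :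
    hpart Λ₀ (bAct Λ₀ ψ d g) = ψ (ψ.symm (hpart Λ₀ g) * d) := by
  ext
  show (repF Λ₀ (bAct Λ₀ ψ d g))⁻¹ * bAct Λ₀ ψ d g = _
  rw [bAct_repF]
  show (repF Λ₀ g)⁻¹ * (repF Λ₀ g * _) = _
  rw [inv_mul_cancel_left]

lemma bAct_one (g : Λ) : bAct Λ₀ ψ 1 g = g := by
  rw [bAct, mul_one, Equiv.apply_symm_apply, repF_mul_hpart]

lemma bAct_mul (d₁ d₂ : Δ) (g : Λ) :
    bAct Λ₀ ψ (d₁ * d₂) g = bAct Λ₀ ψ d₂ (bAct Λ₀ ψ d₁ g) := by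
  conv_rhs => rw [bAct, bAct_repF, bAct_hpart, Equiv.symm_apply_apply]
  rw [bAct, mul_assoc]

lemma bAct_free (d : Δ) (g : Λ) (hdg : bAct Λ₀ ψ d g = g) : d = 1 := by
  have h1 : repF Λ₀ g * (ψ (ψ.symm (hpart Λ₀ g) * d) : Λ)
      = repF Λ₀ g * (hpart Λ₀ g : Λ) := by
    rw [← bAct, hdg, repF_mul_hpart]
  have h2 : ψ (ψ.symm (hpart Λ₀ g) * d) = hpart Λ₀ g :=
    Subtype.ext (mul_left_cancel h1)
  have h3 : ψ.symm (hpart Λ₀ g) * d = ψ.symm (hpart Λ₀ g) := by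
    have := congrArg ψ.symm h2
    simpa using this
  have := mul_left_cancel (a := ψ.symm (hpart Λ₀ g)) (by simpa using h3)
  exact this

lemma bAct_orbit (g g' : Λ) :
    (∃ d, bAct Λ₀ ψ d g = g') ↔ (∃ h : Λ₀, g * (h : Λ) = g') := by
  constructor
  · rintro ⟨d, rfl⟩
    exact ⟨(hpart Λ₀ g)⁻¹ * ψ (ψ.symm (hpart Λ₀ g) * d), by
      rw [bAct_coset]; push_cast; rfl⟩
  · rintro ⟨h, rfl⟩
    refine ⟨(ψ.symm (hpart Λ₀ g))⁻¹ * ψ.symm (hpart Λ₀ (g * (h : Λ))), ?_⟩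
    rw [bAct, mul_inv_cancel_left, Equiv.apply_symm_apply, ← repF_mul Λ₀ g h,
      repF_mul_hpart]

end BAct

section ChainComp
variable {K X K' Y : Type*} [MetricSpace X] [MetricSpace Y]

lemma chainDist_nonempty (α : K → X → X) (x y : X) :
    {s : ℝ | ∃ l : List (X × X), IsChainFrom α x y l ∧
      s = (l.map fun p => dist p.1 p.2).sum}.Nonempty :=
  ⟨dist x y, [(x, y)], ⟨by simp, by simp, List.isChain_singleton _⟩, by simp⟩

lemma chainDist_bddBelow (α : K → X → X) (x y : X) :
    BddBelow {s : ℝ | ∃ l : List (X × X), IsChainFrom α x y l ∧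
      s = (l.map fun p => dist p.1 p.2).sum} := by
  refine ⟨0, fun s hs => ?_⟩
  obtain ⟨l, _, rfl⟩ := hs
  refine List.sum_nonneg fun a ha => ?_
  obtain ⟨p, _, rfl⟩ := List.mem_map.mp ha
  exact dist_nonneg

private lemma sum_map_mul (C : ℝ) (l : List (X × X)) :
    (l.map fun p => C * dist p.1 p.2).sum = C * (l.map fun p => dist p.1 p.2).sum := by
  induction l with
  | nil => simp
  | cons a t ih => simp [ih, mul_add]

lemma chainDist_le_mul (α : K → X → X) (α' : K' → Y → Y) (f : X → Y)
    (C : ℝ) (hC : 0 < C)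
    (hrel : ∀ a b : X, (∃ k, α k a = b) → (∃ k', α' k' (f a) = f b))
    (hd : ∀ a b : X, dist (f a) (f b) ≤ C * dist a b) (x y : X) :
    chainDist α' (f x) (f y) ≤ C * chainDist α x y := by
  rw [chainDist, chainDist, ← div_le_iff₀' hC]
  apply le_csInf (chainDist_nonempty α x y)
  rintro s ⟨l, ⟨h1, h2, h3⟩, rfl⟩
  rw [div_le_iff₀' hC]
  have hmem : ((l.map fun p => (f p.1, f p.2)).map fun p => dist p.1 p.2).sum ∈
      {s : ℝ | ∃ l' : List (Y × Y), IsChainFrom α' (f x) (f y) l' ∧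
        s = (l'.map fun p => dist p.1 p.2).sum} := by
    refine ⟨l.map fun p => (f p.1, f p.2), ⟨?_, ?_, ?_⟩, rfl⟩
    · rw [List.map_map]
      have : (Prod.fst ∘ fun p : X × X => (f p.1, f p.2)) = f ∘ Prod.fst := rfl
      rw [this, ← List.map_map, List.head?_map, h1]; rfl
    · rw [List.map_map]
      have : (Prod.snd ∘ fun p : X × X => (f p.1, f p.2)) = f ∘ Prod.snd := rfl
      rw [this, ← List.map_map, List.getLast?_map, h2]; rfl
    · show List.IsChain _ _; rw [List.isChain_map]
      exact h3.imp fun {p q} h => hrel _ _ h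
  calc sInf {s : ℝ | ∃ l' : List (Y × Y), IsChainFrom α' (f x) (f y) l' ∧
        s = (l'.map fun p => dist p.1 p.2).sum}
      ≤ _ := csInf_le (chainDist_bddBelow α' (f x) (f y)) hmem
    _ ≤ C * (l.map fun p => dist p.1 p.2).sum := by
        rw [List.map_map, ← sum_map_mul]
        exact List.sum_le_sum fun p _ => hd p.1 p.2

end ChainComp

theorem coarse_model_transfer
    {Γ Δ Λ : Type*} [Group Γ] [Group Δ] [Group Λ]
    [MetricSpace Γ] [MetricSpace Δ] [MetricSpace Λ]
    (hinvΓ : ∀ a b c : Γ, dist (a * b) (a * c) = dist b c)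
    (hinvΔ : ∀ a b c : Δ, dist (a * b) (a * c) = dist b c)
    (hinvΛ : ∀ a b c : Λ, dist (a * b) (a * c) = dist b c)
    (hfinΓ : ∀ R : ℝ, {g : Γ | dist 1 g ≤ R}.Finite)
    (hfinΛ : ∀ R : ℝ, {g : Λ | dist 1 g ≤ R}.Finite)
    (Λ₀ : Subgroup Λ)
    (φ : Γ ≃ Λ) (Kφ : ℝ) (hKφ : 1 ≤ Kφ)
    (hφ : ∀ x y : Γ, dist x y / Kφ ≤ dist (φ x) (φ y) ∧
      dist (φ x) (φ y) ≤ Kφ * dist x y)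
    (ψ : Δ ≃ Λ₀) (Kψ : ℝ) (hKψ : 1 ≤ Kψ)
    (hψ : ∀ x y : Δ, dist x y / Kψ ≤ dist (ψ x : Λ) (ψ y : Λ) ∧
      dist (ψ x : Λ) (ψ y : Λ) ≤ Kψ * dist x y) :
    ∃ β : Δ → Γ → Γ, RightTranslationLike β ∧
      (∀ x y : Γ, (∃ d : Δ, β d x = y) ↔ (∃ h : Λ₀, φ x * (h : Λ) = φ y)) ∧
      ∃ K ≥ (1 : ℝ), ∀ x y : Γ,
        chainDist β x y / K ≤
          chainDist (fun (h : Λ₀) (g : Λ) => g * (h : Λ)) (φ x) (φ y) ∧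
        chainDist (fun (h : Λ₀) (g : Λ) => g * (h : Λ)) (φ x) (φ y) ≤
          K * chainDist β x y := by
  have hKφ0 : (0 : ℝ) < Kφ := lt_of_lt_of_le one_pos hKφ
  have hb_disp : ∀ (d : Δ) (g : Λ), dist g (bAct Λ₀ ψ d g) ≤ Kψ * dist (1 : Δ) d := by
    intro d g
    calc dist g (bAct Λ₀ ψ d g)
        = dist (repF Λ₀ g * (hpart Λ₀ g : Λ))
            (repF Λ₀ g * (ψ (ψ.symm (hpart Λ₀ g) * d) : Λ)) := by
          rw [repF_mul_hpart]; rfl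
      _ = dist ((hpart Λ₀ g : Λ₀) : Λ) ((ψ (ψ.symm (hpart Λ₀ g) * d) : Λ₀) : Λ) :=
          hinvΛ _ _ _
      _ = dist ((ψ (ψ.symm (hpart Λ₀ g)) : Λ₀) : Λ)
            ((ψ (ψ.symm (hpart Λ₀ g) * d) : Λ₀) : Λ) := by
          rw [Equiv.apply_symm_apply]
      _ ≤ Kψ * dist (ψ.symm (hpart Λ₀ g)) (ψ.symm (hpart Λ₀ g) * d) :=
          (hψ _ _).2
      _ = Kψ * dist (1 : Δ) d := by
          congr 1
          have := hinvΔ (ψ.symm (hpart Λ₀ g)) 1 d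
          rw [mul_one] at this
          exact this
  set β : Δ → Γ → Γ := fun d x => φ.symm (bAct Λ₀ ψ d (φ x)) with hβ
  have hβ_apply : ∀ d x, β d x = φ.symm (bAct Λ₀ ψ d (φ x)) := fun _ _ => rfl
  have horbβ : ∀ a c : Γ, (∃ d, β d a = c) ↔ (∃ h : Λ₀, φ a * (h : Λ) = φ c) := by
    intro a c
    rw [show (∃ d, β d a = c) ↔ (∃ d, bAct Λ₀ ψ d (φ a) = φ c) from
      ⟨fun ⟨d, hd⟩ => ⟨d, by rw [← hd, hβ_apply, Equiv.apply_symm_apply]⟩,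
       fun ⟨d, hd⟩ => ⟨d, by rw [hβ_apply, hd, Equiv.symm_apply_apply]⟩⟩]
    exact bAct_orbit Λ₀ ψ (φ a) (φ c)
  refine ⟨β, ⟨?_, ?_, ?_, ?_⟩, horbβ, ?_⟩
  · intro x; rw [hβ_apply, bAct_one, Equiv.symm_apply_apply]
  · intro d₁ d₂ x
    rw [hβ_apply, hβ_apply, hβ_apply, bAct_mul, Equiv.apply_symm_apply]
  · intro d x hx
    apply bAct_free Λ₀ ψ d (φ x)
    have := congrArg φ hx
    rw [hβ_apply, Equiv.apply_symm_apply] at this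
    exact this
  · intro d
    refine ⟨Kφ * (Kψ * dist (1 : Δ) d), fun x => ?_⟩
    have h1 : dist x (β d x) ≤ Kφ * dist (φ x) (bAct Λ₀ ψ d (φ x)) := by
      have h := (hφ x (β d x)).1
      rw [hβ_apply, Equiv.apply_symm_apply] at h
      rw [hβ_apply]
      linarith [(div_le_iff₀ hKφ0).mp h]
    calc dist x (β d x) ≤ Kφ * dist (φ x) (bAct Λ₀ ψ d (φ x)) := h1
      _ ≤ Kφ * (Kψ * dist (1 : Δ) d) :=
          mul_le_mul_of_nonneg_left (hb_disp d (φ x)) (le_of_lt hKφ0)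
  · refine ⟨Kφ, hKφ, fun x y => ?_⟩
    constructor
    · rw [div_le_iff₀' hKφ0]
      have := chainDist_le_mul (fun (h : Λ₀) (g : Λ) => g * (h : Λ)) β φ.symm Kφ hKφ0
        (fun a c h => by
          obtain ⟨k, hk⟩ := h
          refine (horbβ (φ.symm a) (φ.symm c)).2 ⟨k, ?_⟩
          rw [Equiv.apply_symm_apply, Equiv.apply_symm_apply]
          exact hk)
        (fun a c => by
          have h := (hφ (φ.symm a) (φ.symm c)).1
          rw [Equiv.apply_symm_apply, Equiv.apply_symm_apply] at h
          linarith [(div_le_iff₀ hKφ0).mp h])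
        (φ x) (φ y)
      simpa using this
    · exact chainDist_le_mul β (fun (h : Λ₀) (g : Λ) => g * (h : Λ)) φ Kφ hKφ0
        (fun a c hd => (horbβ a c).1 hd)
        (fun a c => (hφ a c).2) x y
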